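/- Let M ≥ 1 be a natural number and 0 < α ≤ β real numbers. Let ε₀, …, ε_M, θ₀, …, θ_M be any real parameters with Σ_{m=0}^{M} θ_m = 0. Then there exists λ with α ≤ λ ≤ β such that some complex root of p(z, λ) = z^{M+1} + (ε₀λ − 1 − θ₀)z^M + Σ_{m=1}^{M}(ε_mλ − θ_m)z^{M−m} has modulus at least (√β − √α)/(√β + √α). -/

import Mathlib

open Polynomial Complex Metric Finset
set_option maxHeartbeats 1000000

lemma circle_int_inv (R : ℝ) (hR : 0 < R) (a : ℂ) (ha : ‖a‖ ≠ R) :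
    (∮ z in C(0,R), (z - a)⁻¹) =
      if ‖a‖ < R then 2*Real.pi*Complex.I else 0 := by
  split_ifs with h
  · exact circleIntegral.integral_sub_inv_of_mem_ball (by simpa [Complex.dist_eq] using h)
  · have hgt : R < ‖a‖ := lt_of_le_of_ne (not_lt.mp h) (Ne.symm ha)
    refine circleIntegral_eq_zero_of_differentiable_on_off_countable hR.le
      (Set.countable_empty) ?_ ?_
    · apply ContinuousOn.inv₀ (by fun_prop)
      intro z hz
      have : ‖z‖ ≤ R := by simpa [Complex.dist_eq] using hz
      intro hza
      rw [sub_eq_zero] at hza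
      subst hza; exact absurd this (not_le.mpr hgt)
    · intro z hz
      have : ‖z‖ < R := by simpa [Complex.dist_eq] using hz.1
      have hza : z - a ≠ 0 := by
        intro hza; rw [sub_eq_zero] at hza; subst hza
        exact absurd this (lt_asymm hgt)
      exact ((differentiableAt_id.sub_const a).inv hza)

lemma circle_int_sum (R : ℝ) (hR : 0 < R) (s : Multiset ℂ)
    (hs : ∀ r ∈ s, ‖r‖ ≠ R) :
    CircleIntegrable (fun z => (s.map fun r => (z - r)⁻¹).sum) 0 R ∧
    (∮ z in C(0,R), (s.map fun r => (z - r)⁻¹).sum) =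
      2*Real.pi*Complex.I * ((s.filter fun r => ‖r‖ < R).card : ℂ) := by
  induction s using Multiset.induction_on with
  | empty => exact ⟨by simp [CircleIntegrable], by simp [circleIntegral]⟩
  | cons a s ih =>
    have ha : ‖a‖ ≠ R := hs a (Multiset.mem_cons_self a s)
    have hs' : ∀ r ∈ s, ‖r‖ ≠ R := fun r hr => hs r (Multiset.mem_cons_of_mem hr)
    obtain ⟨ihInt, ihEq⟩ := ih hs'
    have hIa : CircleIntegrable (fun z => (z - a)⁻¹) 0 R := by
      apply ContinuousOn.circleIntegrable hR.le
      apply ContinuousOn.inv₀ (by fun_prop)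
      intro z hz
      have hz' : ‖z‖ = R := by simpa [Complex.dist_eq] using hz
      intro hza
      rw [sub_eq_zero] at hza; subst hza; exact ha hz'
    have key : ∀ z : ℂ, ((a ::ₘ s).map fun r => (z - r)⁻¹).sum =
        (z - a)⁻¹ + (s.map fun r => (z - r)⁻¹).sum := by
      intro z; simp
    constructor
    · have := hIa.add ihInt
      simp only [key]; exact this
    · calc (∮ z in C(0,R), ((a ::ₘ s).map fun r => (z - r)⁻¹).sum)
          = ∮ z in C(0,R), ((z - a)⁻¹ + (s.map fun r => (z - r)⁻¹).sum) := by
            apply circleIntegral.integral_congr hR.le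
            intro z _; exact key z
        _ = (∮ z in C(0,R), (z - a)⁻¹) + (∮ z in C(0,R), (s.map fun r => (z - r)⁻¹).sum) :=
            by simp only [circleIntegral, smul_add,
                intervalIntegral.integral_add hIa.out ihInt.out]
        _ = 2*Real.pi*Complex.I * (((a ::ₘ s).filter fun r => ‖r‖ < R).card : ℂ) := by
            rw [circle_int_inv R hR a ha, ihEq]
            by_cases h : ‖a‖ < R
            · rw [if_pos h]
              simp only [Multiset.filter_cons, if_pos h, Multiset.card_cons]
              push_cast
              simp
              ring
            · rw [if_neg h]
              simp only [Multiset.filter_cons, if_neg h]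
              simp

lemma poly_count (R : ℝ) (hR : 0 < R) (P : Polynomial ℂ)
    (hP : ∀ w : ℂ, ‖w‖ = R → P.eval w ≠ 0) :
    (∮ z in C(0,R), P.derivative.eval z / P.eval z) =
      2*Real.pi*Complex.I * ((P.roots.filter fun r => ‖r‖ < R).card : ℂ) := by
  classical
  have hP0 : P ≠ 0 := by
    intro h
    exact hP R (by simp [hR.le, abs_of_nonneg]) (by simp [h])
  have hroots_ne : ∀ r ∈ P.roots, ‖r‖ ≠ R := by
    intro r hr h
    exact hP r h ((Polynomial.mem_roots hP0).mp hr)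
  have hfact : P = Polynomial.C P.leadingCoeff *
      (P.roots.map fun r => Polynomial.X - Polynomial.C r).prod :=
    (IsAlgClosed.splits P).eq_prod_roots
  have hpt : ∀ z : ℂ, ‖z‖ = R →
      P.derivative.eval z / P.eval z = (P.roots.map fun r => (z - r)⁻¹).sum := by
    intro z hz
    have hez : P.eval z ≠ 0 := hP z hz
    have hevalP : P.eval z =
        P.leadingCoeff * (P.roots.map fun r => z - r).prod := by
      conv_lhs => rw [hfact]
      rw [Polynomial.eval_mul, Polynomial.eval_C, Polynomial.eval_multiset_prod,
        Multiset.map_map]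
      simp [Function.comp]
    have hfacne : ∀ r ∈ P.roots, z - r ≠ 0 := by
      intro r hr h0
      apply hez
      rw [hevalP, Multiset.prod_eq_zero (h := by
        simpa [h0] using Multiset.mem_map_of_mem (fun r => z - r) hr), mul_zero]
    have hder : P.derivative.eval z =
        P.leadingCoeff * (P.roots.map fun i =>
          ((P.roots.erase i).map fun r => z - r).prod).sum := by
      conv_lhs => rw [hfact]
      rw [Polynomial.derivative_C_mul, Polynomial.eval_mul, Polynomial.eval_C]
      congr 1
      rw [Polynomial.derivative_prod]
      rw [← Polynomial.coe_evalRingHom, map_multiset_sum, Multiset.map_map]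
      congr 1
      apply Multiset.map_congr rfl
      intro i hi
      simp only [Function.comp_apply, Polynomial.derivative_sub, Polynomial.derivative_X,
        Polynomial.derivative_C, sub_zero, mul_one, Polynomial.coe_evalRingHom,
        Polynomial.eval_mul, Polynomial.eval_one]
      rw [Polynomial.eval_multiset_prod, Multiset.map_map]
      simp [Function.comp]
    rw [div_eq_iff hez, hevalP, hder]
    rw [← Multiset.sum_map_mul_left, ← Multiset.sum_map_mul_right]
    apply congrArg Multiset.sum
    apply Multiset.map_congr rfl
    intro i hi
    have hzi : z - i ≠ 0 := hfacne i hi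
    have h1 : (Multiset.map (fun r => z - r) P.roots).prod =
        (z - i) * (Multiset.map (fun r => z - r) (P.roots.erase i)).prod :=
      (Multiset.prod_map_erase (f := fun r => z - r) hi).symm
    rw [h1]
    have hinv : (z - i)⁻¹ * (z - i) = 1 := inv_mul_cancel₀ hzi
    linear_combination (-(P.leadingCoeff) *
      (Multiset.map (fun r => z - r) (P.roots.erase i)).prod) * hinv
  calc (∮ z in C(0,R), P.derivative.eval z / P.eval z)
      = ∮ z in C(0,R), (P.roots.map fun r => (z - r)⁻¹).sum := by
        apply circleIntegral.integral_congr hR.le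
        intro z hz
        exact hpt z (by simpa [Complex.dist_eq] using hz)
    _ = 2*Real.pi*Complex.I * ((P.roots.filter fun r => ‖r‖ < R).card : ℂ) :=
        (circle_int_sum R hR P.roots hroots_ne).2


section defs
variable (M : ℕ) (α : ℝ) (ε θ : ℕ → ℝ)

noncomputable def fpoly : Polynomial ℂ :=
  X^(M+1) + (C (((-1 - θ 0 : ℝ) : ℂ)) * X^M +
    ∑ m ∈ Finset.Icc 1 M, C (((-θ m : ℝ) : ℂ)) * X^(M-m))

noncomputable def gpoly : Polynomial ℂ :=
  C (((ε 0 : ℝ)) : ℂ) * X^M + ∑ m ∈ Finset.Icc 1 M, C (((ε m : ℝ)) : ℂ) * X^(M-m)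

lemma evalform (lam : ℝ) (z : ℂ) :
    (fpoly M θ + C ((lam : ℝ) : ℂ) * gpoly M ε).eval z =
      z ^ (M + 1) + ((ε 0 * lam - 1 - θ 0 : ℝ) : ℂ) * z ^ M +
        ∑ m ∈ Finset.Icc 1 M, ((ε m * lam - θ m : ℝ) : ℂ) * z ^ (M - m) := by
  simp only [fpoly, gpoly, eval_add, eval_mul, eval_pow, eval_C, eval_X, eval_finset_sum]
  have hR : ∑ m ∈ Finset.Icc 1 M, ((ε m * lam - θ m : ℝ):ℂ) * z^(M-m) =
      (lam:ℂ) * ∑ m ∈ Finset.Icc 1 M, ((ε m : ℝ):ℂ) * z^(M-m) +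
      ∑ m ∈ Finset.Icc 1 M, ((-θ m : ℝ):ℂ) * z^(M-m) := by
    rw [Finset.mul_sum, ← Finset.sum_add_distrib]
    apply Finset.sum_congr rfl
    intro m _
    push_cast
    ring
  rw [hR]
  push_cast
  ring

lemma fpoly_eval_one (hθ : ∑ m ∈ Finset.range (M + 1), θ m = 0) :
    (fpoly M θ).eval 1 = 0 := by
  have hins : Finset.range (M+1) = insert 0 (Finset.Icc 1 M) := by
    ext x; simp [Nat.lt_succ_iff]; omega
  have hsum : (θ 0 : ℂ) + ∑ m ∈ Finset.Icc 1 M, (θ m : ℂ) = 0 := by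
    have := hθ
    rw [hins, Finset.sum_insert (by simp)] at this
    exact_mod_cast congrArg (fun x : ℝ => (x : ℂ)) this
  simp only [fpoly, eval_add, eval_mul, eval_pow, eval_C, eval_X, eval_finset_sum, one_pow,
    mul_one]
  push_cast
  have hneg : ∑ x ∈ Finset.Icc 1 M, (-(θ x:ℂ)) = - ∑ m ∈ Finset.Icc 1 M, (θ m:ℂ) := by
    simp
  linear_combination hneg - hsum

lemma gpoly_natDegree_le : (gpoly M ε).natDegree ≤ M := by
  apply le_trans (natDegree_add_le _ _)
  simp only [max_le_iff]
  constructor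
  · exact natDegree_C_mul_X_pow_le _ _
  · apply natDegree_sum_le_of_forall_le
    intro m _
    exact le_trans (natDegree_C_mul_X_pow_le _ _) (Nat.sub_le _ _)

lemma fpoly_monic : (fpoly M θ).Monic := by
  apply monic_X_pow_add
  apply lt_of_le_of_lt (degree_le_natDegree)
  have hb : (C (((-1 - θ 0 : ℝ) : ℂ)) * X^M +
      ∑ m ∈ Finset.Icc 1 M, C (((-θ m : ℝ) : ℂ)) * X^(M-m)).natDegree ≤ M := by
    apply le_trans (natDegree_add_le _ _)
    simp only [max_le_iff]
    exact ⟨natDegree_C_mul_X_pow_le _ _, natDegree_sum_le_of_forall_le _ _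
      fun m _ => le_trans (natDegree_C_mul_X_pow_le _ _) (Nat.sub_le _ _)⟩
  exact_mod_cast lt_of_le_of_lt (Nat.cast_le.mpr hb) (Nat.cast_lt.mpr (Nat.lt_succ_self M))

lemma fpoly_degree : (fpoly M θ).degree = (M+1 : ℕ) := by
  rw [fpoly, degree_add_eq_left_of_degree_lt, degree_X_pow]
  rw [degree_X_pow]
  apply lt_of_le_of_lt (degree_le_natDegree)
  have hb : (C (((-1 - θ 0 : ℝ) : ℂ)) * X^M +
      ∑ m ∈ Finset.Icc 1 M, C (((-θ m : ℝ) : ℂ)) * X^(M-m)).natDegree ≤ M := by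
    apply le_trans (natDegree_add_le _ _)
    simp only [max_le_iff]
    exact ⟨natDegree_C_mul_X_pow_le _ _, natDegree_sum_le_of_forall_le _ _
      fun m _ => le_trans (natDegree_C_mul_X_pow_le _ _) (Nat.sub_le _ _)⟩
  exact_mod_cast lt_of_le_of_lt (Nat.cast_le.mpr hb) (Nat.cast_lt.mpr (Nat.lt_succ_self M))

end defs


section X
variable (M : ℕ) (α : ℝ) (ε θ : ℕ → ℝ)

lemma key (M : ℕ) (α β : ℝ) (hα : 0 < α) (hαβ : α < β) (ε θ : ℕ → ℝ)
    (hθ : ∑ m ∈ Finset.range (M + 1), θ m = 0)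
    (hcon : ∀ lam : ℝ, α ≤ lam → lam ≤ β → ∀ z : ℂ,
      z ^ (M + 1) + ((ε 0 * lam - 1 - θ 0 : ℝ) : ℂ) * z ^ M +
        ∑ m ∈ Finset.Icc 1 M, ((ε m * lam - θ m : ℝ) : ℂ) * z ^ (M - m) = 0 →
      ‖z‖ < (Real.sqrt β - Real.sqrt α) / (Real.sqrt β + Real.sqrt α)) :
    False := by
  classical
  set s : ℝ := Real.sqrt α with hs_def
  set r : ℝ := Real.sqrt β with hr_def
  have hs : 0 < s := Real.sqrt_pos.mpr hα
  have hsr : s < r := Real.sqrt_lt_sqrt hα.le hαβ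
  have hrs : 0 < r + s := by linarith
  set γ : ℝ := (r - s) / (r + s) with hγ_def
  have hγ0 : 0 < γ := div_pos (by linarith) hrs
  have hγ1 : γ < 1 := (div_lt_one hrs).mpr (by linarith)
  set c : ℝ := (r + s)^2 / 4 with hc_def
  have hc : 0 < c := by positivity
  have hsq : s^2 = α := Real.sq_sqrt hα.le
  have hrq : r^2 = β := Real.sq_sqrt (hα.trans hαβ).le
  have h1g : 1 - γ = 2*s/(r+s) := by
    rw [hγ_def]; field_simp; ring
  have h2g : 1 + γ = 2*r/(r+s) := by
    rw [hγ_def]; field_simp; ring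
  have hca : c * (1-γ)^2 = α := by
    rw [h1g, hc_def, div_pow, ← hsq]; field_simp; ring
  have hcb : c * (1+γ)^2 = β := by
    rw [h2g, hc_def, div_pow, ← hrq]; field_simp; ring
  -- polynomials
  set f : Polynomial ℂ := fpoly M θ with hf_def
  set g : Polynomial ℂ := gpoly M ε with hg_def
  set u : Polynomial ℂ := C ((c:ℝ):ℂ) * ((1 - X) * ((X - C ((γ^2 : ℝ):ℂ)) * g)) with hu_def
  set A : Polynomial ℂ := X * f + u with hA_def
  set B : Polynomial ℂ := C ((α:ℝ):ℂ) * (X * g) - u with hB_def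
  -- key evaluation identity on the circle
  have hqeval : ∀ (t : ℝ), 0 ≤ t → t ≤ 1 → ∀ w : ℂ, ‖w‖ = γ →
      ∃ lam : ℝ, α ≤ lam ∧ lam ≤ β ∧
        (A + C ((t:ℝ):ℂ) * B).eval w = w * ((f + C ((lam:ℝ):ℂ) * g).eval w) := by
    intro t ht0 ht1 w hw
    have hnsq : ((γ^2 : ℝ) : ℂ) = w * (starRingEnd ℂ) w := by
      rw [Complex.mul_conj]
      norm_cast
      rw [Complex.normSq_eq_norm_sq, hw]
    set ν : ℝ := c * Complex.normSq (1 - w) with hν_def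
    have hw1 : ‖1 - w‖ ≤ 1 + γ := by
      calc ‖1 - w‖ ≤ ‖(1:ℂ)‖ + ‖-w‖ := by
            simpa [sub_eq_add_neg] using norm_add_le 1 (-w)
        _ = 1 + γ := by simp [hw]
    have hw2 : 1 - γ ≤ ‖1 - w‖ := by
      have := norm_add_le (1 - w) w
      simp only [sub_add_cancel] at this
      simp only [norm_one] at this
      rw [hw] at this
      linarith
    have hν1 : α ≤ ν := by
      rw [hν_def, ← hca, Complex.normSq_eq_norm_sq]
      apply mul_le_mul_of_nonneg_left _ hc.le
      apply pow_le_pow_left₀ (by linarith) hw2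
    have hν2 : ν ≤ β := by
      rw [hν_def, ← hcb, Complex.normSq_eq_norm_sq]
      apply mul_le_mul_of_nonneg_left _ hc.le
      apply pow_le_pow_left₀ (norm_nonneg _) hw1
    refine ⟨(1-t) * ν + t * α, ?_, ?_, ?_⟩
    · nlinarith
    · nlinarith
    · -- evaluation computation
      have hconj : ((Complex.normSq (1-w) : ℝ) : ℂ) = (1 - w) * ((1:ℂ) - (starRingEnd ℂ) w) := by
        rw [← Complex.mul_conj, map_sub, map_one]
      have hueval : u.eval w = w * ((ν:ℂ) * g.eval w) := by
        rw [hu_def]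
        simp only [eval_mul, eval_sub, eval_one, eval_X, eval_C]
        rw [hnsq, hν_def]
        push_cast
        rw [hconj]
        ring
      have hAe : A.eval w = w * f.eval w + w * ((ν:ℂ) * g.eval w) := by
        rw [hA_def]; simp only [eval_add, eval_mul, eval_X]; rw [hueval]
      have hBe : B.eval w = ((α:ℝ):ℂ) * (w * g.eval w) - w * ((ν:ℂ) * g.eval w) := by
        rw [hB_def]; simp only [eval_sub, eval_mul, eval_X, eval_C]; rw [hueval]
      simp only [eval_add, eval_mul, eval_C, hAe, hBe]
      push_cast
      ring
  have habsγ : ∀ x : ℝ, ‖circleMap 0 γ x‖ = γ := by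
    intro x; rw [norm_circleMap_zero]; exact abs_of_pos hγ0
  have hnv : ∀ (t : ℝ), 0 ≤ t → t ≤ 1 → ∀ w : ℂ, ‖w‖ = γ →
      (A + C ((t:ℝ):ℂ) * B).eval w ≠ 0 := by
    intro t ht0 ht1 w hw
    obtain ⟨lam, hl1, hl2, heq⟩ := hqeval t ht0 ht1 w hw
    rw [heq]
    have hw0 : w ≠ 0 := by
      intro h
      rw [h, norm_zero] at hw
      exact (ne_of_gt hγ0) hw.symm
    intro h0
    rcases mul_eq_zero.mp h0 with h | h
    · exact hw0 h
    · have h' : (fpoly M θ + C ((lam:ℝ):ℂ) * gpoly M ε).eval w = 0 := by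
        rw [← hf_def, ← hg_def]; exact h
      rw [evalform M ε θ lam w] at h'
      have := hcon lam hl1 hl2 w h'
      rw [hw] at this
      exact lt_irrefl γ this
  set N : ℝ → ℕ := fun t => (((A + C ((t:ℝ):ℂ) * B).roots.filter
      fun r => ‖r‖ < γ).card) with hN_def
  have hint : ∀ (t : ℝ), 0 ≤ t → t ≤ 1 →
      (∮ z in C(0,γ), (A + C ((t:ℝ):ℂ) * B).derivative.eval z /
        (A + C ((t:ℝ):ℂ) * B).eval z) = 2*Real.pi*Complex.I * ((N t : ℕ) : ℂ) :=
    fun t ht0 ht1 => poly_count γ hγ0 _ (hnv t ht0 ht1)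
  set Φ : ℝ → ℝ → ℂ := fun t x => (circleMap 0 γ x * Complex.I) *
      ((A.derivative.eval (circleMap 0 γ x) + ((t:ℝ):ℂ) * B.derivative.eval (circleMap 0 γ x)) /
       (A.eval (circleMap 0 γ x) + ((t:ℝ):ℂ) * B.eval (circleMap 0 γ x))) with hΦ_def
  have hΦint : ∀ (t : ℝ), 0 ≤ t → t ≤ 1 →
      (∫ x in (0:ℝ)..(2*Real.pi), Φ t x) = 2*Real.pi*Complex.I * ((N t : ℕ) : ℂ) := by
    intro t ht0 ht1
    rw [← hint t ht0 ht1]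
    simp only [circleIntegral]
    apply intervalIntegral.integral_congr
    intro x _
    have hd : (A + C ((t:ℝ):ℂ) * B).derivative = A.derivative + C ((t:ℝ):ℂ) * B.derivative := by
      rw [derivative_add, derivative_C_mul]
    beta_reduce
    rw [hd, deriv_circleMap, eval_add, eval_add, eval_mul, eval_C, eval_mul, eval_C, smul_eq_mul,
      hΦ_def]
  have hcontΦ : Continuous (Function.uncurry
      fun (p : (Set.Icc (0:ℝ) 1)) x => Φ (p:ℝ) x) := by
    simp only [hΦ_def, Function.uncurry]
    have hcm : Continuous fun q : (Set.Icc (0:ℝ) 1) × ℝ => circleMap 0 γ q.2 :=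
      (continuous_circleMap 0 γ).comp continuous_snd
    have hct : Continuous fun q : (Set.Icc (0:ℝ) 1) × ℝ => ((q.1 : ℝ) : ℂ) :=
      Complex.continuous_ofReal.comp (continuous_subtype_val.comp continuous_fst)
    apply Continuous.mul (hcm.mul continuous_const)
    apply Continuous.div
    · exact ((A.derivative.continuous).comp hcm).add
        (hct.mul ((B.derivative.continuous).comp hcm))
    · exact ((A.continuous).comp hcm).add (hct.mul ((B.continuous).comp hcm))
    · intro q
      have := hnv (q.1 : ℝ) q.1.2.1 q.1.2.2 (circleMap 0 γ q.2) (habsγ q.2)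
      simp only [eval_add, eval_mul, eval_C] at this
      exact this
  have hGcont : Continuous fun p : (Set.Icc (0:ℝ) 1) =>
      ∫ x in (0:ℝ)..(2*Real.pi), Φ (p:ℝ) x :=
    intervalIntegral.continuous_parametric_intervalIntegral_of_continuous' hcontΦ 0 (2*Real.pi)
  set F : ℝ → ℝ := fun t => (∫ x in (0:ℝ)..(2*Real.pi), Φ t x).im with hF_def
  have hFcont : ContinuousOn F (Set.Icc 0 1) := by
    rw [continuousOn_iff_continuous_restrict]
    exact Complex.continuous_im.comp hGcont
  have hFval : ∀ t, 0 ≤ t → t ≤ 1 → F t = 2*Real.pi*((N t : ℕ) : ℝ) := by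
    intro t ht0 ht1
    rw [hF_def]
    simp only
    rw [hΦint t ht0 ht1]
    simp [Complex.mul_im]
  -- endpoint t = 1
  set pa : Polynomial ℂ := f + C ((α:ℝ):ℂ) * g with hpa_def
  have hA1 : A + C ((1:ℝ):ℂ) * B = X * pa := by
    rw [hA_def, hB_def, hpa_def]
    simp only [Complex.ofReal_one, map_one]
    ring
  have hgdeg : g.degree < ((M+1 : ℕ) : WithBot ℕ) := by
    apply lt_of_le_of_lt (degree_le_natDegree)
    exact_mod_cast lt_of_le_of_lt (Nat.cast_le.mpr (by
      rw [hg_def]; exact gpoly_natDegree_le M ε)) (Nat.cast_lt.mpr (Nat.lt_succ_self M))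
  have hCgdeg : (C ((α:ℝ):ℂ) * g).degree < (fpoly M θ).degree := by
    rw [fpoly_degree M θ]
    apply lt_of_le_of_lt (degree_mul_le _ _)
    calc (C ((α:ℝ):ℂ)).degree + g.degree ≤ 0 + g.degree := by
          exact add_le_add degree_C_le le_rfl
      _ = g.degree := by rw [zero_add]
      _ < ((M+1:ℕ) : WithBot ℕ) := hgdeg
  have hmonic : pa.Monic := by
    rw [hpa_def, hf_def]
    exact (fpoly_monic M θ).add_of_left hCgdeg
  have hpa0 : pa ≠ 0 := hmonic.ne_zero
  have hpadeg : pa.degree = ((M+1 : ℕ) : WithBot ℕ) := by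
    rw [hpa_def, hf_def, degree_add_eq_left_of_degree_lt, fpoly_degree M θ]
    rw [fpoly_degree M θ] at hCgdeg ⊢
    · exact hCgdeg
  have hpand : pa.natDegree = M + 1 := natDegree_eq_of_degree_eq_some hpadeg
  have hcardpa : Multiset.card pa.roots = M + 1 := by
    rw [splits_iff_card_roots.mp (IsAlgClosed.splits pa), hpand]
  have hrootssmall : ∀ z ∈ pa.roots, ‖z‖ < γ := by
    intro z hz
    have hz0 : pa.eval z = 0 := (mem_roots hpa0).mp hz
    have h' : (fpoly M θ + C ((α:ℝ):ℂ) * gpoly M ε).eval z = 0 := by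
      rw [← hf_def, ← hg_def, ← hpa_def]; exact hz0
    rw [evalform M ε θ α z] at h'
    exact hcon α le_rfl hαβ.le z h'
  have hN1 : N 1 = M + 2 := by
    rw [hN_def]
    simp only
    rw [hA1, roots_mul (mul_ne_zero X_ne_zero hpa0), roots_X]
    rw [Multiset.filter_add]
    rw [Multiset.filter_eq_self.mpr (by
      intro z hz
      rw [Multiset.mem_singleton] at hz
      rw [hz, norm_zero]; exact hγ0)]
    rw [Multiset.filter_eq_self.mpr hrootssmall]
    rw [Multiset.card_add, hcardpa]
    simp only [Multiset.card_singleton]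
    omega
  -- endpoint t = 0
  have hA0 : A + C ((0:ℝ):ℂ) * B = A := by push_cast; simp
  have hAne : A ≠ 0 := by
    intro h
    apply hnv 0 le_rfl zero_le_one ((γ:ℝ):ℂ) (by
      rw [Complex.norm_real, Real.norm_eq_abs]; exact abs_of_pos hγ0)
    rw [hA0, h, eval_zero]
  have h1root : (1:ℂ) ∈ A.roots := by
    rw [mem_roots hAne]
    show A.eval 1 = 0
    rw [hA_def]
    simp only [eval_add, eval_mul, eval_X, one_mul]
    have hu1 : u.eval 1 = 0 := by
      rw [hu_def]
      simp
    rw [hu1, hf_def, fpoly_eval_one M θ hθ, add_zero]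
  have hfnd : f.natDegree = M + 1 := by
    rw [hf_def]; exact natDegree_eq_of_degree_eq_some (fpoly_degree M θ)
  have hAdeg : A.natDegree ≤ M + 2 := by
    rw [hA_def]
    apply le_trans (natDegree_add_le _ _)
    simp only [max_le_iff]
    constructor
    · exact le_trans (natDegree_mul_le) (by rw [natDegree_X, hfnd]; omega)
    · rw [hu_def]
      apply le_trans (natDegree_mul_le)
      have h1 : ((1:Polynomial ℂ) - X).natDegree ≤ 1 :=
        le_trans (natDegree_sub_le _ _) (by simp)
      have h2 : (X - C ((γ^2:ℝ):ℂ) : Polynomial ℂ).natDegree ≤ 1 :=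
        le_trans (natDegree_sub_le _ _) (by simp)
      have h3 : g.natDegree ≤ M := by rw [hg_def]; exact gpoly_natDegree_le M ε
      calc (C ((c:ℝ):ℂ)).natDegree + (((1:Polynomial ℂ)-X) * ((X - C ((γ^2:ℝ):ℂ)) * g)).natDegree
          ≤ 0 + (((1:Polynomial ℂ)-X) * ((X - C ((γ^2:ℝ):ℂ)) * g)).natDegree := by
            simp [natDegree_C]
        _ ≤ (((1:Polynomial ℂ)-X) * ((X - C ((γ^2:ℝ):ℂ)) * g)).natDegree := by rw [zero_add]
        _ ≤ ((1:Polynomial ℂ)-X).natDegree + ((X - C ((γ^2:ℝ):ℂ)) * g).natDegree := natDegree_mul_le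
        _ ≤ 1 + (1 + M) := by
            apply add_le_add h1
            exact le_trans natDegree_mul_le (add_le_add h2 h3)
        _ = M + 2 := by omega
  have hN0 : N 0 ≤ M + 1 := by
    rw [hN_def]
    simp only
    rw [hA0]
    have hrw : A.roots = (1:ℂ) ::ₘ A.roots.erase 1 := (Multiset.cons_erase h1root).symm
    rw [hrw, Multiset.filter_cons_of_neg _ (by
      rw [norm_one]; exact not_lt.mpr hγ1.le)]
    have hcard : Multiset.card (A.roots.erase 1) = Multiset.card A.roots - 1 :=
      Multiset.card_erase_of_mem h1root
    have := Multiset.card_le_card (Multiset.filter_le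
      (fun r => ‖r‖ < γ) (A.roots.erase 1))
    have hcr : Multiset.card A.roots ≤ M + 2 := le_trans (card_roots' A) hAdeg
    omega
  -- IVT contradiction
  have hπ : (0:ℝ) < 2*Real.pi := by positivity
  have hF0 : F 0 = 2*Real.pi*((N 0 : ℕ):ℝ) := hFval 0 le_rfl zero_le_one
  have hF1 : F 1 = 2*Real.pi*((N 1 : ℕ):ℝ) := hFval 1 zero_le_one le_rfl
  have hNcast : ((N 0 : ℕ):ℝ) ≤ (M:ℝ) + 1 := by exact_mod_cast hN0
  have hival : 2*Real.pi*(((N 0 : ℕ):ℝ) + 1/2) ∈ Set.Icc (F 0) (F 1) := by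
    constructor
    · rw [hF0]; nlinarith
    · rw [hF1, hN1]; push_cast; nlinarith
  obtain ⟨t, ht, hty⟩ := intermediate_value_Icc zero_le_one hFcont hival
  have hFt := hFval t ht.1 ht.2
  rw [hFt] at hty
  have hNt : ((N t : ℕ):ℝ) = ((N 0 : ℕ):ℝ) + 1/2 :=
    mul_left_cancel₀ (ne_of_gt hπ) hty
  have h2 : (2*(N t) : ℕ) = 2*(N 0) + 1 := by
    have : (2*(N t) : ℝ) = 2*(N 0) + 1 := by push_cast; linarith
    exact_mod_cast this
  omega

end X

/-- worst-case lower bound for any M-tap memory scheme: for any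
parameters with Σ_{m=0}^{M} θ_m = 0 there is λ ∈ [α, β] such that some root of
p(z, λ) has modulus at least (√β − √α)/(√β + √α). -/
theorem stmt_7 (M : ℕ) (hM : 1 ≤ M) (α β : ℝ) (hα : 0 < α) (hαβ : α ≤ β)
    (ε θ : ℕ → ℝ) (hθ : ∑ m ∈ Finset.range (M + 1), θ m = 0) :
    ∃ lam : ℝ, α ≤ lam ∧ lam ≤ β ∧
      ∃ z : ℂ,
        z ^ (M + 1) + ((ε 0 * lam - 1 - θ 0 : ℝ) : ℂ) * z ^ M +
          ∑ m ∈ Finset.Icc 1 M, ((ε m * lam - θ m : ℝ) : ℂ) * z ^ (M - m) = 0 ∧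
        (Real.sqrt β - Real.sqrt α) / (Real.sqrt β + Real.sqrt α) ≤ ‖z‖ := by
  rcases eq_or_lt_of_le hαβ with heq | hlt
  · subst heq
    refine ⟨α, le_rfl, le_rfl, ?_⟩
    have hgdeg : (gpoly M ε).degree < ((M+1 : ℕ) : WithBot ℕ) := by
      apply lt_of_le_of_lt (degree_le_natDegree)
      exact_mod_cast lt_of_le_of_lt (Nat.cast_le.mpr (gpoly_natDegree_le M ε))
        (Nat.cast_lt.mpr (Nat.lt_succ_self M))
    have hCgdeg : (C ((α:ℝ):ℂ) * gpoly M ε).degree < (fpoly M θ).degree := by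
      rw [fpoly_degree M θ]
      apply lt_of_le_of_lt (degree_mul_le _ _)
      calc (C ((α:ℝ):ℂ)).degree + (gpoly M ε).degree
          ≤ 0 + (gpoly M ε).degree := add_le_add degree_C_le le_rfl
        _ = (gpoly M ε).degree := by rw [zero_add]
        _ < ((M+1:ℕ) : WithBot ℕ) := hgdeg
    have hdeg : 0 < (fpoly M θ + C ((α:ℝ):ℂ) * gpoly M ε).degree := by
      rw [degree_add_eq_left_of_degree_lt hCgdeg, fpoly_degree M θ]
      exact_mod_cast Nat.succ_pos M
    obtain ⟨z, hz⟩ := Complex.exists_root hdeg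
    refine ⟨z, ?_, ?_⟩
    · rw [← evalform M ε θ α z]; exact hz
    · simp only [sub_self, zero_div]
      exact norm_nonneg z
  · by_contra hcontra
    push_neg at hcontra
    exact key M α β hα hlt ε θ hθ hcontra
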